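/- arXiv:2112.12171 — 4 statements merged into one kernel-verified Lean document; each statement's English description precedes it below -/
import Mathlib

section
/- If the smoothing function f̂(ε,x) is built from the nested plus-function representation of f(x) = max{g₁(x),…,g_m(x)} by replacing each occurrence of the plus function p̂ with a smoothing P(ε,·) satisfying |P(ε,y) - p̂(y)| ≤ κε for all y, then |f̂(ε,x) - f(x)| ≤ (m-1)κε for all x ∈ ℝ and ε > 0. -/
/-- Nested plus-function representation of the maximum of a list of functions. -/
noncomputable def nestedMax (x : ℝ) : List (ℝ → ℝ) → ℝ
  | [] => 0
  | [g] => g x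
  | g :: g' :: gs => g x + max (nestedMax x (g' :: gs) - g x) 0

/-- Nested smoothing obtained by replacing each plus function by `P`. -/
noncomputable def nestedSmooth (P : ℝ → ℝ) (x : ℝ) : List (ℝ → ℝ) → ℝ
  | [] => 0
  | [g] => g x
  | g :: g' :: gs => g x + P (nestedSmooth P x (g' :: gs) - g x)

theorem nestedSmooth_error_bound (κ ε : ℝ) (hκ : 0 < κ) (hε : 0 < ε)
    (P : ℝ → ℝ) (hP : ∀ y : ℝ, |P y - max y 0| ≤ κ * ε)
    (gs : List (ℝ → ℝ)) (hgs : gs ≠ []) (x : ℝ) :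
    |nestedSmooth P x gs - nestedMax x gs| ≤ ((gs.length : ℝ) - 1) * κ * ε := by
  induction gs with
  | nil => exact absurd rfl hgs
  | cons g tail ih =>
    match tail, ih with
    | [], _ =>
      simp [nestedSmooth, nestedMax]
    | g' :: rest, ih =>
      have ih' := ih (by simp) -- |s - m| ≤ (len-1)κε
      set s := nestedSmooth P x (g' :: rest) with hs
      set m := nestedMax x (g' :: rest) with hm
      have h1 : |P (s - g x) - max (s - g x) 0| ≤ κ * ε := hP _
      have h2 : |max (s - g x) 0 - max (m - g x) 0| ≤ |s - m| := by
        have h := abs_max_sub_max_le_abs (s - g x) (m - g x) 0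
        have e : s - g x - (m - g x) = s - m := by ring
        rwa [e] at h
      have key : nestedSmooth P x (g :: g' :: rest) - nestedMax x (g :: g' :: rest)
          = (P (s - g x) - max (s - g x) 0) + (max (s - g x) 0 - max (m - g x) 0) := by
        simp [nestedSmooth, nestedMax, ← hs, ← hm]
      rw [key]
      have hlen : ((g :: g' :: rest).length : ℝ) - 1
          = (((g' :: rest).length : ℝ) - 1) + 1 := by push_cast [List.length]; ring
      calc |(P (s - g x) - max (s - g x) 0) + (max (s - g x) 0 - max (m - g x) 0)|
          ≤ |P (s - g x) - max (s - g x) 0| + |max (s - g x) 0 - max (m - g x) 0| := abs_add_le _ _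
        _ ≤ κ * ε + (((g' :: rest).length : ℝ) - 1) * κ * ε := by
            exact add_le_add h1 (h2.trans ih')
        _ = (((g :: g' :: rest).length : ℝ) - 1) * κ * ε := by rw [hlen]; ring
end

section
/- Let E be a real Hilbert space, C ⊆ E nonempty closed convex, A : E → E* strongly monotone with constant c_A > 0 (i.e., (A(v) - A(w))(v - w) ≥ c_A‖v-w‖² for all v,w), X a Banach space, γ : E → X linear continuous, and J⁰ : X × X → ℝ satisfying the one-sided Lipschitz condition J⁰(y₁; y₂ - y₁) + J⁰(y₂; y₁ - y₂) ≤ c_J‖y₁ - y₂‖²_X for all y₁, y₂ ∈ X, with c_J‖γ‖² < c_A. Then the bifunction φ(v,w) = A(v)(w-v) + J⁰(γv; γw - γv) - λ(w-v) (for a fixed λ ∈ E*) satisfies the strong monotonicity estimate φ(v,w) + φ(w,v) ≤ -(c_A - c_J‖γ‖²)‖v - w‖²_E for all v, w ∈ C. -/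
theorem bifunction_strong_monotonicity
    {E : Type*} [NormedAddCommGroup E] [InnerProductSpace ℝ E] [CompleteSpace E]
    {X : Type*} [NormedAddCommGroup X] [NormedSpace ℝ X]
    (C : Set E) (hC : C.Nonempty) (hCclosed : IsClosed C) (hCconvex : Convex ℝ C)
    (A : E → (E →L[ℝ] ℝ)) (cA : ℝ) (hcA : 0 < cA)
    (hA : ∀ v w : E, (A v - A w) (v - w) ≥ cA * ‖v - w‖ ^ 2)
    (γ : E →L[ℝ] X)
    (J0 : X → X → ℝ) (cJ : ℝ) (hcJ : 0 ≤ cJ)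
    (hJ : ∀ y₁ y₂ : X, J0 y₁ (y₂ - y₁) + J0 y₂ (y₁ - y₂) ≤ cJ * ‖y₁ - y₂‖ ^ 2)
    (hsmall : cJ * ‖γ‖ ^ 2 < cA)
    (lam : E →L[ℝ] ℝ)
    (φ : E → E → ℝ)
    (hφ : ∀ v w : E, φ v w = A v (w - v) + J0 (γ v) (γ w - γ v) - lam (w - v)) :
    ∀ v ∈ C, ∀ w ∈ C,
      φ v w + φ w v ≤ -(cA - cJ * ‖γ‖ ^ 2) * ‖v - w‖ ^ 2 := by
  intro v _ w _
  have hA' := hA v w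
  have hJ' := hJ (γ v) (γ w)
  have hγ : ‖γ v - γ w‖ ≤ ‖γ‖ * ‖v - w‖ := by
    calc ‖γ v - γ w‖ = ‖γ (v - w)‖ := by rw [map_sub]
    _ ≤ ‖γ‖ * ‖v - w‖ := γ.le_opNorm _
  have hγ2 : ‖γ v - γ w‖ ^ 2 ≤ ‖γ‖ ^ 2 * ‖v - w‖ ^ 2 := by
    rw [← mul_pow]
    exact pow_le_pow_left₀ (norm_nonneg _) hγ 2
  have hJ2 : J0 (γ v) (γ w - γ v) + J0 (γ w) (γ v - γ w) ≤ cJ * ‖γ‖ ^ 2 * ‖v - w‖ ^ 2 := by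
    calc J0 (γ v) (γ w - γ v) + J0 (γ w) (γ v - γ w) ≤ cJ * ‖γ v - γ w‖ ^ 2 := hJ'
    _ ≤ cJ * (‖γ‖ ^ 2 * ‖v - w‖ ^ 2) := by
        exact mul_le_mul_of_nonneg_left hγ2 hcJ
    _ = cJ * ‖γ‖ ^ 2 * ‖v - w‖ ^ 2 := by ring
  have hAeq : A v (w - v) + A w (v - w) = -((A v - A w) (v - w)) := by
    simp [map_sub, sub_eq_add_neg]
    ring
  have hlam : lam (w - v) + lam (v - w) = 0 := by
    rw [← map_add]; simp
  rw [hφ v w, hφ w v]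
  have hAle : A v (w - v) + A w (v - w) ≤ -(cA * ‖v - w‖ ^ 2) := by
    rw [hAeq]; linarith [hA']
  nlinarith [hAle, hJ2, hlam]
end

section
/- Let b : ℝ → ℝ be piecewise Lipschitz with common Lipschitz constant α₀ on each piece, having finitely many jump discontinuities t₁ᴶ < … < t_kᴶ in an interval, with all jumps non-negative (left limit ≤ right limit at each jump point). Then for all t₂ < t₁ it holds that b(t₁) - b(t₂) ≥ -α₀(t₁ - t₂), i.e., the difference quotient (b(t₁) - b(t₂))/(t₁ - t₂) ≥ -α₀. -/
open Filter

/-- Base case: no jump point strictly inside `(t₂, t₁)`. -/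
lemma base_no_interior_jump
    (b : ℝ → ℝ) (α₀ : ℝ) (hα₀ : 0 ≤ α₀)
    (J : Finset ℝ) (bl br : ℝ → ℝ)
    (hleft : ∀ s ∈ J, Tendsto b (nhdsWithin s (Set.Iio s)) (nhds (bl s)))
    (hright : ∀ s ∈ J, Tendsto b (nhdsWithin s (Set.Ioi s)) (nhds (br s)))
    (hval : ∀ s ∈ J, bl s ≤ b s ∧ b s ≤ br s)
    (hlip : ∀ u v : ℝ, (∀ s ∈ J, s ∉ Set.Icc (min u v) (max u v)) →
      |b u - b v| ≤ α₀ * |u - v|)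
    (t₂ t₁ : ℝ) (h : t₂ < t₁)
    (hno : ∀ s ∈ J, ¬(t₂ < s ∧ s < t₁)) :
    b t₁ - b t₂ ≥ -α₀ * (t₁ - t₂) := by
  have key : ∀ u v : ℝ, t₂ < u → u ≤ v → v < t₁ → b v - b u ≥ -α₀ * (v - u) := by
    intro u v hu huv hv
    have hmem : ∀ s ∈ J, s ∉ Set.Icc (min u v) (max u v) := by
      intro s hs hsm
      rw [min_eq_left huv, max_eq_right huv] at hsm
      exact hno s hs ⟨lt_of_lt_of_le hu hsm.1, lt_of_le_of_lt hsm.2 hv⟩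
    have h0 := hlip u v hmem
    have heq : |u - v| = v - u := by
      rw [abs_sub_comm]; exact abs_of_nonneg (by linarith)
    rw [heq] at h0
    have h7 : b u - b v ≤ α₀ * (v - u) := le_trans (le_abs_self _) h0
    linarith
  rw [ge_iff_le, ← sub_nonneg]
  have main : ∀ ε > 0, -α₀ * (t₁ - t₂) ≤ (b t₁ - b t₂) + ε := by
    intro ε hε
    set m := (t₂ + t₁) / 2 with hm
    have hm1 : t₂ < m := by simp only [hm]; linarith
    have hm2 : m < t₁ := by simp only [hm]; linarith
    -- near t₂ from the right
    have hA : ∀ᶠ u in nhdsWithin t₂ (Set.Ioi t₂), t₂ < u ∧ u < m ∧ b t₂ ≤ b u + ε / 2 := by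
      have h1 : ∀ᶠ u in nhdsWithin t₂ (Set.Ioi t₂), t₂ < u :=
        eventually_mem_nhdsWithin
      have h2 : ∀ᶠ u in nhdsWithin t₂ (Set.Ioi t₂), u < m :=
        (eventually_lt_nhds hm1).filter_mono nhdsWithin_le_nhds
      by_cases hJ : t₂ ∈ J
      · have := (hright t₂ hJ).eventually (Metric.ball_mem_nhds (br t₂) (by linarith : (0:ℝ) < ε/2))
        filter_upwards [h1, h2, this] with u hu1 hu2 hu3
        refine ⟨hu1, hu2, ?_⟩
        have : |b u - br t₂| < ε / 2 := by
          simpa [Real.dist_eq] using hu3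
        have h4 := (abs_lt.mp this).1
        have h5 := (hval t₂ hJ).2
        linarith
      · have hcont : Tendsto (fun u => α₀ * (u - t₂)) (nhdsWithin t₂ (Set.Ioi t₂)) (nhds (α₀ * (t₂ - t₂))) := by
          exact ((continuous_const.mul (continuous_id.sub continuous_const)).tendsto t₂).mono_left
            nhdsWithin_le_nhds
        have hev : ∀ᶠ u in nhdsWithin t₂ (Set.Ioi t₂), α₀ * (u - t₂) < ε / 2 := by
          apply hcont.eventually_lt_const
          simp; linarith
        filter_upwards [h1, h2, hev] with u hu1 hu2 hu3
        refine ⟨hu1, hu2, ?_⟩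
        have hmem : ∀ s ∈ J, s ∉ Set.Icc (min t₂ u) (max t₂ u) := by
          intro s hs hsm
          rw [min_eq_left hu1.le, max_eq_right hu1.le] at hsm
          rcases eq_or_lt_of_le hsm.1 with rfl | hlt
          · exact hJ hs
          · exact hno s hs ⟨hlt, lt_trans (lt_of_le_of_lt hsm.2 hu2) hm2⟩
        have h0 := hlip t₂ u hmem
        have heq : |t₂ - u| = u - t₂ := by
          rw [abs_sub_comm]; exact abs_of_nonneg (by linarith)
        rw [heq] at h0
        have h7 : b t₂ - b u ≤ α₀ * (u - t₂) := le_trans (le_abs_self _) h0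
        linarith
    -- near t₁ from the left
    have hB : ∀ᶠ v in nhdsWithin t₁ (Set.Iio t₁), m < v ∧ v < t₁ ∧ b v ≤ b t₁ + ε / 2 := by
      have h1 : ∀ᶠ v in nhdsWithin t₁ (Set.Iio t₁), v < t₁ :=
        eventually_mem_nhdsWithin
      have h2 : ∀ᶠ v in nhdsWithin t₁ (Set.Iio t₁), m < v :=
        (eventually_gt_nhds hm2).filter_mono nhdsWithin_le_nhds
      by_cases hJ : t₁ ∈ J
      · have := (hleft t₁ hJ).eventually (Metric.ball_mem_nhds (bl t₁) (by linarith : (0:ℝ) < ε/2))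
        filter_upwards [h1, h2, this] with v hv1 hv2 hv3
        refine ⟨hv2, hv1, ?_⟩
        have : |b v - bl t₁| < ε / 2 := by
          simpa [Real.dist_eq] using hv3
        have h4 := (abs_lt.mp this).2
        have h5 := (hval t₁ hJ).1
        linarith
      · have hcont : Tendsto (fun v => α₀ * (t₁ - v)) (nhdsWithin t₁ (Set.Iio t₁)) (nhds (α₀ * (t₁ - t₁))) := by
          exact ((continuous_const.mul (continuous_const.sub continuous_id)).tendsto t₁).mono_left
            nhdsWithin_le_nhds
        have hev : ∀ᶠ v in nhdsWithin t₁ (Set.Iio t₁), α₀ * (t₁ - v) < ε / 2 := by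
          apply hcont.eventually_lt_const
          simp; linarith
        filter_upwards [h1, h2, hev] with v hv1 hv2 hv3
        refine ⟨hv2, hv1, ?_⟩
        have hmem : ∀ s ∈ J, s ∉ Set.Icc (min v t₁) (max v t₁) := by
          intro s hs hsm
          rw [min_eq_left hv1.le, max_eq_right hv1.le] at hsm
          rcases eq_or_lt_of_le hsm.2 with rfl | hlt
          · exact hJ hs
          · exact hno s hs ⟨lt_trans hm1 (lt_of_lt_of_le hv2 hsm.1), hlt⟩
        have h0 := hlip v t₁ hmem
        have heq : |v - t₁| = t₁ - v := by
          rw [abs_of_nonpos (by linarith : v - t₁ ≤ 0)]; ring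
        rw [heq] at h0
        have h7 : b v - b t₁ ≤ α₀ * (t₁ - v) := le_trans (le_abs_self _) h0
        linarith
    obtain ⟨u, hu1, hu2, hu3⟩ := hA.exists
    obtain ⟨v, hv1, hv2, hv3⟩ := hB.exists
    have hk := key u v hu1 (le_of_lt (lt_trans hu2 hv1)) hv2
    have hmul : α₀ * (v - u) ≤ α₀ * (t₁ - t₂) :=
      mul_le_mul_of_nonneg_left (by linarith) hα₀
    linarith
  by_contra hc
  push_neg at hc
  have := main (-((b t₁ - b t₂) - -α₀ * (t₁ - t₂)) / 2) (by linarith)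
  linarith

theorem piecewise_lipschitz_nonneg_jumps_difference_quotient
    (b : ℝ → ℝ) (α₀ : ℝ) (hα₀ : 0 ≤ α₀)
    (J : Finset ℝ)  -- the finitely many jump points
    (bl br : ℝ → ℝ)  -- one-sided limits at the jump points
    (hleft : ∀ s ∈ J, Tendsto b (nhdsWithin s (Set.Iio s)) (nhds (bl s)))
    (hright : ∀ s ∈ J, Tendsto b (nhdsWithin s (Set.Ioi s)) (nhds (br s)))
    (hjump : ∀ s ∈ J, bl s ≤ br s)  -- all jumps are non-negative
    (hval : ∀ s ∈ J, bl s ≤ b s ∧ b s ≤ br s)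
    -- `b` is `α₀`-Lipschitz on every interval containing no jump point:
    (hlip : ∀ u v : ℝ, (∀ s ∈ J, s ∉ Set.Icc (min u v) (max u v)) →
      |b u - b v| ≤ α₀ * |u - v|) :
    ∀ t₂ t₁ : ℝ, t₂ < t₁ → b t₁ - b t₂ ≥ -α₀ * (t₁ - t₂) := by
  intro t₂ t₁ hlt
  -- strong induction on the number of jumps strictly inside the interval
  have aux : ∀ n : ℕ, ∀ t₂ : ℝ, t₂ < t₁ →
      (J.filter (fun s => t₂ < s ∧ s < t₁)).card ≤ n →
      b t₁ - b t₂ ≥ -α₀ * (t₁ - t₂) := by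
    intro n
    induction n with
    | zero =>
      intro t₂ h hc
      apply base_no_interior_jump b α₀ hα₀ J bl br hleft hright hval hlip t₂ t₁ h
      intro s hs hcon
      have : s ∈ J.filter (fun s => t₂ < s ∧ s < t₁) := Finset.mem_filter.mpr ⟨hs, hcon⟩
      rw [Nat.le_zero, Finset.card_eq_zero] at hc
      simp [hc] at this
    | succ n ih =>
      intro t₂ h hc
      by_cases hemp : (J.filter (fun s => t₂ < s ∧ s < t₁)).Nonempty
      · set F := J.filter (fun s => t₂ < s ∧ s < t₁) with hF
        set s₀ := F.min' hemp with hs₀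
        have hs₀F : s₀ ∈ F := F.min'_mem hemp
        have hs₀J : s₀ ∈ J := (Finset.mem_filter.mp hs₀F).1
        have hs₀I : t₂ < s₀ ∧ s₀ < t₁ := (Finset.mem_filter.mp hs₀F).2
        -- no interior jump in (t₂, s₀)
        have h1 : b s₀ - b t₂ ≥ -α₀ * (s₀ - t₂) := by
          apply base_no_interior_jump b α₀ hα₀ J bl br hleft hright hval hlip t₂ s₀ hs₀I.1
          intro s hs hcon
          have hsF : s ∈ F := Finset.mem_filter.mpr ⟨hs, hcon.1, lt_trans hcon.2 hs₀I.2⟩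
          have := F.min'_le s hsF
          exact absurd this (not_le.mpr hcon.2)
        -- induction for (s₀, t₁): fewer jumps
        have h2 : b t₁ - b s₀ ≥ -α₀ * (t₁ - s₀) := by
          apply ih s₀ hs₀I.2
          have hsub : J.filter (fun s => s₀ < s ∧ s < t₁) ⊆ F.erase s₀ := by
            intro x hx
            rw [Finset.mem_filter] at hx
            refine Finset.mem_erase.mpr ⟨ne_of_gt hx.2.1, ?_⟩
            exact Finset.mem_filter.mpr ⟨hx.1, lt_trans hs₀I.1 hx.2.1, hx.2.2⟩
          calc (J.filter (fun s => s₀ < s ∧ s < t₁)).card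
              ≤ (F.erase s₀).card := Finset.card_le_card hsub
            _ = F.card - 1 := Finset.card_erase_of_mem hs₀F
            _ ≤ n := by omega
        linarith
      · rw [Finset.not_nonempty_iff_eq_empty] at hemp
        apply base_no_interior_jump b α₀ hα₀ J bl br hleft hright hval hlip t₂ t₁ h
        intro s hs hcon
        have : s ∈ J.filter (fun s => t₂ < s ∧ s < t₁) := Finset.mem_filter.mpr ⟨hs, hcon⟩
        simp [hemp] at this
  exact aux (J.filter (fun s => t₂ < s ∧ s < t₁)).card t₂ hlt le_rfl
end

section
/- Let E, X be real normed spaces, γ : E → X linear continuous, A : E → E* strongly monotone with constant c_A > 0, and J⁰ satisfy J⁰(y₁; y₂-y₁) + J⁰(y₂; y₁-y₂) ≤ c_J‖y₁-y₂‖²_X with c_J‖γ‖²_{E→X} < c_A. If û, ŵ ∈ C (C ⊆ E convex) both satisfy the hemivariational inequality A(v̂)(v - v̂) + J⁰(γv̂; γv - γv̂) ≥ λ(v - v̂) for all v ∈ C (with v̂ = û resp. ŵ), then û = ŵ. -/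
theorem hemivariational_inequality_uniqueness
    {E : Type*} [NormedAddCommGroup E] [NormedSpace ℝ E]
    {X : Type*} [NormedAddCommGroup X] [NormedSpace ℝ X]
    (γ : E →L[ℝ] X)
    (A : E → (E →L[ℝ] ℝ)) (cA : ℝ) (hcA : 0 < cA)
    (hA : ∀ v w : E, (A v - A w) (v - w) ≥ cA * ‖v - w‖ ^ 2)
    (J0 : X → X → ℝ) (cJ : ℝ) (hcJ : 0 ≤ cJ)
    (hJ : ∀ y₁ y₂ : X, J0 y₁ (y₂ - y₁) + J0 y₂ (y₁ - y₂) ≤ cJ * ‖y₁ - y₂‖ ^ 2)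
    (hsmall : cJ * ‖γ‖ ^ 2 < cA)
    (lam : E →L[ℝ] ℝ)
    (C : Set E) (hCconvex : Convex ℝ C)
    (u w : E) (hu : u ∈ C) (hw : w ∈ C)
    (hHVIu : ∀ v ∈ C, A u (v - u) + J0 (γ u) (γ v - γ u) ≥ lam (v - u))
    (hHVIw : ∀ v ∈ C, A w (v - w) + J0 (γ w) (γ v - γ w) ≥ lam (v - w)) :
    u = w := by
  have h1 := hHVIu w hw
  have h2 := hHVIw u hu
  have hmono := hA u w
  have hJuw := hJ (γ u) (γ w)
  have hnorm : ‖γ u - γ w‖ ≤ ‖γ‖ * ‖u - w‖ := by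
    calc ‖γ u - γ w‖ = ‖γ (u - w)‖ := by rw [map_sub]
    _ ≤ ‖γ‖ * ‖u - w‖ := γ.le_opNorm _
  have hsq : ‖γ u - γ w‖ ^ 2 ≤ (‖γ‖ * ‖u - w‖) ^ 2 :=
    pow_le_pow_left₀ (norm_nonneg _) hnorm 2
  have key : cA * ‖u - w‖ ^ 2 ≤ cJ * ‖γ‖ ^ 2 * ‖u - w‖ ^ 2 := by
    have hsub : (A u - A w) (u - w) = A u (u - w) - A w (u - w) := rfl
    have hlam : lam (w - u) + lam (u - w) = 0 := by
      rw [← map_add]; simp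
    calc cA * ‖u - w‖ ^ 2 ≤ (A u - A w) (u - w) := hmono
    _ = A u (u - w) - A w (u - w) := hsub
    _ ≤ J0 (γ u) (γ w - γ u) + J0 (γ w) (γ u - γ w) := by
        have e1 : A u (u - w) = - A u (w - u) := by
          rw [← map_neg, neg_sub]
        nlinarith [h1, h2, hlam]
    _ ≤ cJ * ‖γ u - γ w‖ ^ 2 := hJuw
    _ ≤ cJ * (‖γ‖ * ‖u - w‖) ^ 2 := by nlinarith
    _ = cJ * ‖γ‖ ^ 2 * ‖u - w‖ ^ 2 := by ring
  have : ‖u - w‖ ^ 2 = 0 := by nlinarith [sq_nonneg ‖u - w‖]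
  have hsub0 : u - w = 0 := by
    have h0 : ‖u - w‖ = 0 := by nlinarith [norm_nonneg (u - w)]
    exact norm_eq_zero.mp h0
  exact sub_eq_zero.mp hsub0
end
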